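/- Let K be a number field, 𝔓 a prime of K above 2, and λ ∈ K with λ ≠ 0, 1. Suppose v_𝔓(λ) ≥ v_𝔓(1−λ) ≥ 0 and v_𝔓(j) < 0, where j = 2⁸(λ² − λ + 1)³/(λ²(λ−1)²). Then v_𝔓(λ) > 4·v_𝔓(2). -/

import Mathlib

open NumberField IsDedekindDomain

/-- Let `𝔓 | 2` be a prime of a number field `K` and `λ ∈ K`, `λ ≠ 0, 1`, with
`v_𝔓(λ) ≥ v_𝔓(1−λ) ≥ 0` and `v_𝔓(j) < 0` where `j = 2⁸(λ²−λ+1)³/(λ²(λ−1)²)`.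
Then `v_𝔓(λ) > 4·v_𝔓(2)`.  (In the multiplicative valuation, additive `v(x) ≥ v(y)`
corresponds to `valuation x ≤ valuation y`, and `v(λ) > 4 v(2)` to
`valuation λ < (valuation 2)⁴`.) -/
theorem valuation_lambda_gt_four_val_two {K : Type*} [Field K] [NumberField K]
    (P : HeightOneSpectrum (𝓞 K)) (hP2 : (2 : 𝓞 K) ∈ P.asIdeal)
    (lam : K) (h0 : lam ≠ 0) (h1 : lam ≠ 1)
    (hord : P.valuation K lam ≤ P.valuation K (1 - lam) ∧ P.valuation K (1 - lam) ≤ 1)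
    (hj : 1 < P.valuation K (2 ^ 8 * (lam ^ 2 - lam + 1) ^ 3 / (lam ^ 2 * (lam - 1) ^ 2))) :
    P.valuation K lam < (P.valuation K (2 : K)) ^ 4 := by
  obtain ⟨hab, hb1⟩ := hord
  set v : Valuation K (WithZero (Multiplicative ℤ)) := P.valuation K with hv
  -- valuation of 2 is < 1 and ≠ 0
  have hw : v (2 : K) < 1 := by
    have : v (algebraMap (𝓞 K) K 2) < 1 :=
      (P.valuation_lt_one_iff_dvd 2).mpr (Ideal.dvd_span_singleton.mpr hP2)
    simpa [map_ofNat] using this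
  have hw0 : v (2 : K) ≠ 0 := by
    rw [hv, Valuation.ne_zero_iff]
    exact two_ne_zero
  have ha0 : v lam ≠ 0 := by
    rw [hv, Valuation.ne_zero_iff]; exact h0
  have hbb : v (lam - 1) = v (1 - lam) := by
    rw [show (1 : K) - lam = -(lam - 1) by ring, Valuation.map_neg]
  have ha1 : v lam ≤ 1 := hab.trans hb1
  -- valuation of λ(λ-1)
  have hprod : v (lam ^ 2 - lam) = v lam * v (1 - lam) := by
    rw [show lam ^ 2 - lam = lam * (lam - 1) by ring, Valuation.map_mul, hbb]
  have hprod1 : v (lam ^ 2 - lam) ≤ 1 := by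
    rw [hprod]; exact mul_le_one' ha1 hb1
  -- valuation of λ² - λ + 1 is ≤ 1
  have hc1 : v (lam ^ 2 - lam + 1) ≤ 1 := by
    refine (Valuation.map_add v _ _).trans (max_le ?_ ?_)
    · exact hprod1
    · rw [Valuation.map_one]
  -- rewrite the valuation of j
  have hj' : 1 < v (2 : K) ^ 8 * v (lam ^ 2 - lam + 1) ^ 3 / (v lam ^ 2 * v (lam - 1) ^ 2) := by
    simpa [map_div₀, map_mul, map_pow] using hj
  have hden0 : (0 : WithZero (Multiplicative ℤ)) < v lam ^ 2 * v (lam - 1) ^ 2 := by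
    rw [hbb]
    have hb0 : v (1 - lam) ≠ 0 := by
      rw [hv, Valuation.ne_zero_iff]
      intro h; apply h1; linear_combination -h
    exact zero_lt_iff.mpr (mul_ne_zero (pow_ne_zero _ ha0) (pow_ne_zero _ hb0))
  have hkey : v lam ^ 2 * v (lam - 1) ^ 2 < v (2 : K) ^ 8 * v (lam ^ 2 - lam + 1) ^ 3 := by
    have := (lt_div_iff₀ hden0).mp hj'
    simpa using this
  -- v λ < 1
  have haless : v lam < 1 := by
    by_contra h
    push_neg at h
    have h4 : (1 : WithZero (Multiplicative ℤ)) ≤ v lam ^ 2 * v (lam - 1) ^ 2 := by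
      have hb : (1 : WithZero (Multiplicative ℤ)) ≤ v (lam - 1) := by rw [hbb]; exact h.trans hab
      calc (1 : WithZero (Multiplicative ℤ)) = 1 * 1 := (one_mul 1).symm
        _ ≤ v lam ^ 2 * v (lam - 1) ^ 2 :=
          mul_le_mul' (one_le_pow_of_one_le' h 2) (one_le_pow_of_one_le' hb 2)
    have h5 : v (2 : K) ^ 8 * v (lam ^ 2 - lam + 1) ^ 3 < 1 := by
      calc v (2 : K) ^ 8 * v (lam ^ 2 - lam + 1) ^ 3 ≤ v (2 : K) ^ 8 * 1 :=
            mul_le_mul_right (pow_le_one' hc1 3) _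
        _ = v (2 : K) ^ 8 := mul_one _
        _ < 1 := pow_lt_one' hw (by norm_num)
    exact absurd (h4.trans_lt hkey) (not_lt.mpr h5.le)
  -- v(1-λ) = 1
  have hb : v (1 - lam) = 1 := by
    refine le_antisymm hb1 ?_
    have h6 : (1 : WithZero (Multiplicative ℤ)) = v ((1 - lam) + lam) := by
      rw [show (1 - lam) + lam = 1 by ring, Valuation.map_one]
    have h7 := (Valuation.map_add v (1 - lam) lam)
    rw [← h6] at h7
    rcases max_cases (v (1 - lam)) (v lam) with ⟨hm, _⟩ | ⟨hm, _⟩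
    · rwa [hm] at h7
    · rw [hm] at h7; exact absurd (h7.trans_lt haless) (lt_irrefl 1)
  -- v(λ²-λ+1) = 1
  have hc : v (lam ^ 2 - lam + 1) = 1 := by
    refine le_antisymm hc1 ?_
    have hsmall : v (lam ^ 2 - lam) < 1 := by
      rw [hprod, hb, mul_one]; exact haless
    have h6 : (1 : WithZero (Multiplicative ℤ)) = v ((lam ^ 2 - lam + 1) - (lam ^ 2 - lam)) := by
      rw [show (lam ^ 2 - lam + 1) - (lam ^ 2 - lam) = 1 by ring, Valuation.map_one]
    have h7 := (Valuation.map_sub v (lam ^ 2 - lam + 1) (lam ^ 2 - lam))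
    rw [← h6] at h7
    rcases max_cases (v (lam ^ 2 - lam + 1)) (v (lam ^ 2 - lam)) with ⟨hm, _⟩ | ⟨hm, _⟩
    · rwa [hm] at h7
    · rw [hm] at h7; exact absurd (h7.trans_lt hsmall) (lt_irrefl 1)
  -- conclude
  have hkey2 : v lam ^ 2 < (v (2 : K) ^ 4) ^ 2 := by
    have := hkey
    rw [hbb, hb, hc] at this
    simpa [← pow_mul] using this
  by_contra h
  push_neg at h
  exact absurd hkey2 (not_lt.mpr (pow_le_pow_left' h 2))
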